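/- Let p be a prime and n ≥ 1 an integer. Suppose F is a collection of m vectors in Z_{p^2}^n containing no 3-sunflower. Then there exists a (2n, m) local PMF for triangles (3-cycles) over F_p. -/

import Mathlib

theorem digit_inj (p : ℕ) (hp : p.Prime) (z z' : Fin (p^2))
    (h1 : ((z.val % p : ℕ) : ZMod p) = ((z'.val % p : ℕ) : ZMod p))
    (h2 : ((z.val / p : ℕ) : ZMod p) = ((z'.val / p : ℕ) : ZMod p)) : z = z' := by
  haveI : Fact p.Prime := ⟨hp⟩
  have hp0 : 0 < p := hp.pos
  have e1 : z.val % p = z'.val % p := by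
    have := congrArg ZMod.val h1
    rwa [ZMod.val_cast_of_lt (Nat.mod_lt _ hp0), ZMod.val_cast_of_lt (Nat.mod_lt _ hp0)] at this
  have d1 : z.val / p < p := by
    exact Nat.div_lt_of_lt_mul (lt_of_lt_of_eq z.isLt (pow_two p))
  have d2 : z'.val / p < p := by
    exact Nat.div_lt_of_lt_mul (lt_of_lt_of_eq z'.isLt (pow_two p))
  have e2 : z.val / p = z'.val / p := by
    have := congrArg ZMod.val h2
    rwa [ZMod.val_cast_of_lt d1, ZMod.val_cast_of_lt d2] at this
  have : z.val = z'.val := by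
    conv_lhs => rw [← Nat.div_add_mod z.val p]
    conv_rhs => rw [← Nat.div_add_mod z'.val p]
    rw [e1, e2]
  exact Fin.ext this


/-- Let `p` be prime and `n ≥ 1`. If `F` is a collection of `m`
(distinct) vectors in `Z_{p^2}^n` containing no `3`-sunflower, then there exists
a `(2n, m)` local PMF for triangles (`3`-cycles) over `F_p`. -/
theorem stmt_3 (p n m : ℕ) (hp : p.Prime) (hn : 1 ≤ n)
    (F : Fin m → Fin n → Fin (p ^ 2)) (hinj : Function.Injective F)
    (hsf : ∀ v₁ v₂ v₃ : Fin n → Fin (p ^ 2),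
      (∃ i, F i = v₁) → (∃ i, F i = v₂) → (∃ i, F i = v₃) →
      (∀ i : Fin n, (v₁ i = v₂ i ∧ v₂ i = v₃ i) ∨
        (v₁ i ≠ v₂ i ∧ v₁ i ≠ v₃ i ∧ v₂ i ≠ v₃ i)) →
      v₁ = v₂ ∧ v₂ = v₃) :
    ∃ x : Fin m → Fin 3 → Fin (2 * n) → ZMod p,
      (∀ i, ∑ j, x i j = 0) ∧
      ∀ idx : Fin 3 → Fin m, ∑ j, x (idx j) j = 0 → ∀ a b, idx a = idx b := by
  classical
  set u : Fin m → Fin n → ZMod p := fun i k => ((F i k).val % p : ℕ) with hu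
  set w : Fin m → Fin n → ZMod p := fun i k => ((F i k).val / p : ℕ) with hw
  refine ⟨fun i j c =>
    Sum.elim
      (fun k => ![u i k, w i k, -u i k - w i k] j)
      (fun k => ![w i k, -u i k - w i k, u i k] j)
      (finSumFinEquiv.symm (finCongr (two_mul n) c)), ?_, ?_⟩
  · intro i
    funext c
    rw [Finset.sum_apply, Fin.sum_univ_three]
    rcases hs : finSumFinEquiv.symm (finCongr (two_mul n) c) with k | k <;>
      simp only [finCongr_apply] at hs <;> simp only [finCongr_apply, hs, Sum.elim_inl, Sum.elim_inr,
        Matrix.cons_val_zero, Matrix.cons_val_one, Matrix.head_cons, Pi.zero_apply,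
        Matrix.cons_val_two, Matrix.tail_cons] <;> ring
  · intro idx hsum
    have eqs : ∀ (s : Fin n ⊕ Fin n),
        (Sum.elim
          (fun k => u (idx 0) k + w (idx 1) k + (-u (idx 2) k - w (idx 2) k))
          (fun k => w (idx 0) k + (-u (idx 1) k - w (idx 1) k) + u (idx 2) k) s) = 0 := by
      intro s
      have := congrFun hsum ((finCongr (two_mul n)).symm (finSumFinEquiv s))
      rw [Finset.sum_apply, Fin.sum_univ_three] at this
      simp only [finCongr_apply, Fin.cast_cast, Fin.cast_eq_self,
        Equiv.apply_symm_apply, Equiv.symm_apply_apply] at this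
      rcases s with k | k <;> simpa using this
    have eq1 : ∀ k : Fin n,
        u (idx 0) k + w (idx 1) k + (-u (idx 2) k - w (idx 2) k) = 0 :=
      fun k => eqs (Sum.inl k)
    have eq2 : ∀ k : Fin n,
        w (idx 0) k + (-u (idx 1) k - w (idx 1) k) + u (idx 2) k = 0 :=
      fun k => eqs (Sum.inr k)
    have hcond : ∀ k : Fin n,
        (F (idx 0) k = F (idx 1) k ∧ F (idx 1) k = F (idx 2) k) ∨
        (F (idx 0) k ≠ F (idx 1) k ∧ F (idx 0) k ≠ F (idx 2) k ∧
          F (idx 1) k ≠ F (idx 2) k) := by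
      intro k
      by_cases h01 : F (idx 0) k = F (idx 1) k
      · left
        refine ⟨h01, ?_⟩
        have hU : u (idx 0) k = u (idx 1) k := by simp only [hu]; rw [h01]
        have hW : w (idx 0) k = w (idx 1) k := by simp only [hw]; rw [h01]
        have hU2 : u (idx 2) k = u (idx 1) k := by
          linear_combination eq2 k - hW
        have hW2 : w (idx 2) k = w (idx 1) k := by
          linear_combination hU - hU2 - eq1 k
        exact (digit_inj p hp _ _ hU2 hW2).symm
      · right
        by_cases h12 : F (idx 1) k = F (idx 2) k
        · exfalso
          have hU : u (idx 1) k = u (idx 2) k := by simp only [hu]; rw [h12]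
          have hW : w (idx 1) k = w (idx 2) k := by simp only [hw]; rw [h12]
          have hU0 : u (idx 0) k = u (idx 1) k := by
            linear_combination eq1 k - hU - hW
          have hW0 : w (idx 0) k = w (idx 1) k := by
            linear_combination eq2 k + hU
          exact h01 (digit_inj p hp _ _ hU0 hW0)
        · refine ⟨h01, ?_, h12⟩
          intro h02
          have hU : u (idx 0) k = u (idx 2) k := by simp only [hu]; rw [h02]
          have hW : w (idx 0) k = w (idx 2) k := by simp only [hw]; rw [h02]
          have hW1 : w (idx 1) k = w (idx 0) k := by
            linear_combination eq1 k - hU - hW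
          have hU1 : u (idx 1) k = u (idx 0) k := by
            linear_combination -(eq2 k) - hW1 - hU
          exact h01 (digit_inj p hp _ _ hU1 hW1).symm
    have := hsf (F (idx 0)) (F (idx 1)) (F (idx 2)) ⟨_, rfl⟩ ⟨_, rfl⟩ ⟨_, rfl⟩ hcond
    have i01 : idx 0 = idx 1 := hinj this.1
    have i12 : idx 1 = idx 2 := hinj this.2
    have key3 : ∀ a : Fin 3, idx a = idx 0 := by
      intro a
      fin_cases a
      · rfl
      · exact i01.symm
      · exact (i01.trans i12).symm
    intro a b
    rw [key3 a, key3 b]
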